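/- Interchange lemma: Let M be a one-way partially blind deterministic real-counter machine with state set Q recognizing language L, let ρ_k be the largest counter generator, and let r = |Q|² + 1. For any decomposition x = v_1 w_1 v_2 w_2 ... v_r w_r v_{r+1} ∈ L with each |w_i| ≥ 1 and with the counter value after reading v_1 at least (Σ_{i=2}^r |v_i| + Σ_{i=1}^r |w_i|)·ρ_k, there exist indices 1 ≤ l < m ≤ r such that the string x' obtained from x by swapping w_l and w_m is also in L. -/

import Mathlib

/-- A one-way partially blind deterministic automaton with a real counter
`C_ℝ(k) = (ℝ, {√p₁,…,√p_k}, ℝ⁻)`: at each step it changes state and adds or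
subtracts one generator `√pᵢ` (square roots of distinct primes). -/
structure RealCounterPBDC (σ : Type) where
  k : ℕ
  p : Fin k → ℕ
  p_prime : ∀ i, (p i).Prime
  p_inj : Function.Injective p
  Q : Type
  [finQ : Fintype Q]
  q₀ : Q
  /-- transition: next state, together with the generator index and a flag
  (`true` = increment by `√pᵢ`, `false` = decrement by `√pᵢ`). -/
  δ : Q → σ → Q × (Fin k × Bool)
  accept : Set Q

namespace RealCounterPBDC

variable {σ : Type} (M : RealCounterPBDC σ)

/-- The real value added to the counter in one step. -/
noncomputable def incr (m : Fin M.k × Bool) : ℝ :=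
  if m.2 then Real.sqrt (M.p m.1) else -Real.sqrt (M.p m.1)

/-- One step on a configuration (state, counter value). -/
noncomputable def step (c : M.Q × ℝ) (a : σ) : M.Q × ℝ :=
  ((M.δ c.1 a).1, c.2 + M.incr (M.δ c.1 a).2)

/-- Configuration reached from the initial configuration after reading `x`. -/
noncomputable def run (x : List σ) : M.Q × ℝ :=
  x.foldl M.step (M.q₀, 0)

/-- Counter value after reading `x` from the start. -/
noncomputable def ctr (x : List σ) : ℝ := (M.run x).2

/-- `M` accepts `x` iff the counter stays nonnegative throughout (partial
blindness: otherwise the machine crashes), the final state is accepting, and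
the final counter value is `0`. -/
noncomputable def language : Language σ :=
  { x | (∀ y, y <+: x → 0 ≤ M.ctr y) ∧ (M.run x).1 ∈ M.accept ∧ M.ctr x = 0 }

end RealCounterPBDC

attribute [instance] RealCounterPBDC.finQ

namespace IA

variable {σ : Type} (M : RealCounterPBDC σ)

noncomputable def fs (q : M.Q) (x : List σ) : M.Q := (x.foldl M.step (q, 0)).1
noncomputable def dl (q : M.Q) (x : List σ) : ℝ := (x.foldl M.step (q, 0)).2

lemma foldl_shift (x : List σ) (q : M.Q) (c d : ℝ) :
    x.foldl M.step (q, c + d) = ((x.foldl M.step (q, d)).1, c + (x.foldl M.step (q, d)).2) := by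
  induction x generalizing q d with
  | nil => simp
  | cons a x ih =>
    simp only [List.foldl_cons, RealCounterPBDC.step]
    rw [add_assoc]
    exact ih _ _

lemma foldl_step_eq (x : List σ) (q : M.Q) (c : ℝ) :
    x.foldl M.step (q, c) = (fs M q x, c + dl M q x) := by
  have h := foldl_shift M x q c 0
  rw [add_zero] at h
  exact h

lemma run_eq (x : List σ) : M.run x = (fs M M.q₀ x, dl M M.q₀ x) := by
  rw [RealCounterPBDC.run, foldl_step_eq]; rw [zero_add]

lemma ctr_eq (x : List σ) : M.ctr x = dl M M.q₀ x := by
  rw [RealCounterPBDC.ctr, run_eq]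

lemma fs_append (q : M.Q) (x y : List σ) : fs M q (x ++ y) = fs M (fs M q x) y := by
  unfold fs
  simp only [List.foldl_append, foldl_step_eq]

lemma dl_append (q : M.Q) (x y : List σ) :
    dl M q (x ++ y) = dl M q x + dl M (fs M q x) y := by
  unfold dl fs
  simp only [List.foldl_append, foldl_step_eq]
  ring

lemma dl_cons (q : M.Q) (a : σ) (x : List σ) :
    dl M q (a :: x) = M.incr (M.δ q a).2 + dl M (M.δ q a).1 x := by
  unfold dl
  simp only [List.foldl_cons, RealCounterPBDC.step]
  rw [foldl_step_eq, foldl_step_eq]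
  simp

lemma dl_lb {ρ : ℝ} (hb : ∀ mm, -ρ ≤ M.incr mm) (x : List σ) :
    ∀ q : M.Q, -((x.length : ℝ) * ρ) ≤ dl M q x := by
  induction x with
  | nil => intro q; simp [dl]
  | cons a x ih =>
    intro q
    rw [dl_cons]
    have h1 := hb (M.δ q a).2
    have h2 := ih (M.δ q a).1
    push_cast [List.length_cons]
    nlinarith [h1, h2]

lemma take_split {α : Type*} (L : List α) (a b : ℕ) (hab : a < b) (hb : b ≤ L.length) :
    L.take b = L.take a ++ L[a]'(lt_of_lt_of_le hab hb) :: (L.drop (a+1)).take (b - (a+1)) := by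
  have h1 : L.take b = L.take a ++ (L.drop a).take (b - a) := by
    rw [← List.take_add]; congr 1; omega
  rw [h1]
  congr 1
  rw [← List.getElem_cons_drop (as := L) (i := a) (lt_of_lt_of_le hab hb)]
  have h2 : b - a = (b - (a+1)) + 1 := by omega
  rw [h2, List.take_succ_cons]

lemma swap_core (a b c x1 x2 : List σ) (q : M.Q)
    (k1 : fs M (fs M q a) x2 = fs M (fs M q a) x1)
    (k2 : fs M (fs M (fs M q a) x1) b = fs M q a) :
    fs M q (a ++ x2 ++ b ++ x1 ++ c) = fs M q (a ++ x1 ++ b ++ x2 ++ c) ∧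
    dl M q (a ++ x2 ++ b ++ x1 ++ c) = dl M q (a ++ x1 ++ b ++ x2 ++ c) := by
  constructor
  · simp only [fs_append]
    rw [k1, k2, k1]
  · simp only [dl_append, fs_append]
    rw [k1, k2, k1]
    ring

end IA

theorem interchange_lemma
    {σ : Type} (M : RealCounterPBDC σ)
    (r : ℕ) (hr : r = Fintype.card M.Q ^ 2 + 1)
    (ρk : ℝ) (hρk : ρk = ⨆ i, Real.sqrt (M.p i))
    (v : Fin (r + 1) → List σ) (w : Fin r → List σ)
    (hw : ∀ i, 1 ≤ (w i).length)
    (hx : (List.ofFn fun i : Fin r => v i.castSucc ++ w i).flatten ++ v (Fin.last r)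
            ∈ M.language)
    (hctr : ((∑ i ∈ Finset.univ.filter
                fun i : Fin (r + 1) => i ≠ 0 ∧ i ≠ Fin.last r, (v i).length) +
              ∑ i, (w i).length : ℕ) * ρk ≤ M.ctr (v 0)) :
    ∃ l m : Fin r, l < m ∧
      (List.ofFn fun i : Fin r => v i.castSucc ++ w (Equiv.swap l m i)).flatten
        ++ v (Fin.last r) ∈ M.language := by
  classical
  have hr0 : 0 < r := by rw [hr]; positivity
  set Bl : List (List σ) := List.ofFn (fun i : Fin r => v i.castSucc ++ w i) with hBl
  have hBlen : Bl.length = r := by rw [hBl]; exact List.length_ofFn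
  -- pigeonhole on (entry, exit) states of the w-blocks
  have hcard : Fintype.card (M.Q × M.Q) < Fintype.card (Fin r) := by
    rw [Fintype.card_prod, Fintype.card_fin, hr, pow_two]; omega
  obtain ⟨l, m, hlm, hglm⟩ :
      ∃ l m : Fin r, l < m ∧
        (IA.fs M M.q₀ ((Bl.take (l : ℕ)).flatten ++ v l.castSucc),
          IA.fs M (IA.fs M M.q₀ ((Bl.take (l : ℕ)).flatten ++ v l.castSucc)) (w l)) =
        (IA.fs M M.q₀ ((Bl.take (m : ℕ)).flatten ++ v m.castSucc),
          IA.fs M (IA.fs M M.q₀ ((Bl.take (m : ℕ)).flatten ++ v m.castSucc)) (w m)) := by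
    obtain ⟨l₀, m₀, hne, hg⟩ := Fintype.exists_ne_map_eq_of_card_lt
      (fun i : Fin r =>
        (IA.fs M M.q₀ ((Bl.take (i : ℕ)).flatten ++ v i.castSucc),
          IA.fs M (IA.fs M M.q₀ ((Bl.take (i : ℕ)).flatten ++ v i.castSucc)) (w i))) hcard
    rcases lt_or_gt_of_ne hne with h | h
    · exact ⟨l₀, m₀, h, hg⟩
    · exact ⟨m₀, l₀, h, hg.symm⟩
  refine ⟨l, m, hlm, ?_⟩
  have hlmv : (l : ℕ) < (m : ℕ) := hlm
  have hmr : (m : ℕ) < r := m.isLt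
  set BlU : List (List σ) :=
    List.ofFn (fun i : Fin r => v i.castSucc ++ w (Equiv.swap l m i)) with hBlU
  have hBUlen : BlU.length = r := by rw [hBlU]; exact List.length_ofFn
  -- pointwise agreement off {l, m}
  have hgetU : ∀ (j : ℕ) (h1 : j < BlU.length) (h2 : j < Bl.length),
      j ≠ (l : ℕ) → j ≠ (m : ℕ) → BlU[j] = Bl[j] := by
    intro j h1 h2 hne1 hne2
    have hjr : j < r := by omega
    have e1 : BlU[j]'h1 = v (⟨j, hjr⟩ : Fin r).castSucc ++ w (Equiv.swap l m ⟨j, hjr⟩) := by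
      simp [hBlU]
    have e2 : Bl[j]'h2 = v (⟨j, hjr⟩ : Fin r).castSucc ++ w (⟨j, hjr⟩ : Fin r) := by
      simp [hBl]
    rw [e1, e2, Equiv.swap_apply_of_ne_of_ne (Fin.ne_of_val_ne hne1) (Fin.ne_of_val_ne hne2)]
  have hgl : Bl[(l : ℕ)]'(by omega) = v l.castSucc ++ w l := by
    simp [hBl, List.getElem_ofFn, Fin.eta]
  have hgm : Bl[(m : ℕ)]'(by omega) = v m.castSucc ++ w m := by
    simp [hBl, List.getElem_ofFn, Fin.eta]
  have hglU : BlU[(l : ℕ)]'(by omega) = v l.castSucc ++ w m := by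
    simp [hBlU, List.getElem_ofFn, Fin.eta, Equiv.swap_apply_left]
  have hgmU : BlU[(m : ℕ)]'(by omega) = v m.castSucc ++ w l := by
    simp [hBlU, List.getElem_ofFn, Fin.eta, Equiv.swap_apply_right]
  -- the three common pieces
  have hTakeU : BlU.take (l : ℕ) = Bl.take (l : ℕ) := by
    apply List.ext_getElem (by simp [hBUlen, hBlen])
    intro i hi1 hi2
    simp only [List.getElem_take]
    have hi : i < (l : ℕ) := by simp [List.length_take] at hi1; omega
    exact hgetU i (by omega) (by omega) (by omega) (by omega)
  have hMidU : (BlU.drop ((l : ℕ)+1)).take ((m : ℕ) - ((l : ℕ)+1)) =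
      (Bl.drop ((l : ℕ)+1)).take ((m : ℕ) - ((l : ℕ)+1)) := by
    apply List.ext_getElem (by simp [hBUlen, hBlen])
    intro i hi1 hi2
    have hi : i < (m : ℕ) - ((l : ℕ)+1) := by
      simp [List.length_take, List.length_drop, hBUlen] at hi1; omega
    simp only [List.getElem_take, List.getElem_drop]
    exact hgetU _ (by omega) (by omega) (by omega) (by omega)
  have hDropU : BlU.drop ((m : ℕ)+1) = Bl.drop ((m : ℕ)+1) := by
    apply List.ext_getElem (by simp [hBUlen, hBlen])
    intro i hi1 hi2
    simp only [List.getElem_drop]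
    have hi : i < r - ((m : ℕ)+1) := by simp [List.length_drop, hBUlen] at hi1; omega
    exact hgetU _ (by omega) (by omega) (by omega) (by omega)
  -- splits of Bl and BlU around positions l and m
  have hsplit : Bl = Bl.take (m : ℕ) ++ Bl[(m : ℕ)]'(by omega) :: Bl.drop ((m : ℕ)+1) := by
    conv_lhs => rw [← List.take_append_drop (m : ℕ) Bl]
    rw [List.getElem_cons_drop]
  have hsplitU : BlU = BlU.take (m : ℕ) ++ BlU[(m : ℕ)]'(by omega) :: BlU.drop ((m : ℕ)+1) := by
    conv_lhs => rw [← List.take_append_drop (m : ℕ) BlU]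
    rw [List.getElem_cons_drop]
  have htakem : Bl.take (m : ℕ) =
      Bl.take (l : ℕ) ++ Bl[(l : ℕ)]'(by omega) ::
        (Bl.drop ((l : ℕ)+1)).take ((m : ℕ) - ((l : ℕ)+1)) :=
    IA.take_split Bl _ _ hlmv (by omega)
  have htakemU : BlU.take (m : ℕ) =
      BlU.take (l : ℕ) ++ BlU[(l : ℕ)]'(by omega) ::
        (BlU.drop ((l : ℕ)+1)).take ((m : ℕ) - ((l : ℕ)+1)) :=
    IA.take_split BlU _ _ hlmv (by omega)
  -- 5-segment decompositions
  have hpreW : Bl.flatten =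
      ((Bl.take (l : ℕ)).flatten ++ v l.castSucc) ++ w l ++
        (((Bl.drop ((l : ℕ)+1)).take ((m : ℕ) - ((l : ℕ)+1))).flatten ++ v m.castSucc) ++ w m ++
        (Bl.drop ((m : ℕ)+1)).flatten := by
    conv_lhs => rw [hsplit, htakem]
    simp only [List.flatten_append, List.flatten_cons, hgl, hgm, List.append_assoc]
  have hpreU : BlU.flatten =
      ((Bl.take (l : ℕ)).flatten ++ v l.castSucc) ++ w m ++
        (((Bl.drop ((l : ℕ)+1)).take ((m : ℕ) - ((l : ℕ)+1))).flatten ++ v m.castSucc) ++ w l ++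
        (Bl.drop ((m : ℕ)+1)).flatten := by
    conv_lhs => rw [hsplitU, htakemU, hTakeU, hMidU, hDropU]
    simp only [List.flatten_append, List.flatten_cons, hglU, hgmU, List.append_assoc]
  -- entry/exit state facts
  have hee := congrArg Prod.fst hglm
  have hff := congrArg Prod.snd hglm
  simp only at hee hff
  have k1 : IA.fs M (IA.fs M M.q₀ ((Bl.take (l : ℕ)).flatten ++ v l.castSucc)) (w m) =
      IA.fs M (IA.fs M M.q₀ ((Bl.take (l : ℕ)).flatten ++ v l.castSucc)) (w l) := by
    rw [hff, hee]
  have hsegm : (Bl.take (m : ℕ)).flatten ++ v m.castSucc =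
      ((Bl.take (l : ℕ)).flatten ++ v l.castSucc) ++ (w l ++
        (((Bl.drop ((l : ℕ)+1)).take ((m : ℕ) - ((l : ℕ)+1))).flatten ++ v m.castSucc)) := by
    conv_lhs => rw [htakem]
    simp only [List.flatten_append, List.flatten_cons, hgl, List.append_assoc]
  have k2 : IA.fs M (IA.fs M (IA.fs M M.q₀ ((Bl.take (l : ℕ)).flatten ++ v l.castSucc)) (w l))
        (((Bl.drop ((l : ℕ)+1)).take ((m : ℕ) - ((l : ℕ)+1))).flatten ++ v m.castSucc) =
      IA.fs M M.q₀ ((Bl.take (l : ℕ)).flatten ++ v l.castSucc) := by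
    have h := hee
    rw [hsegm] at h
    conv at h => rhs; rw [IA.fs_append, IA.fs_append]
    exact h.symm
  have hcore := IA.swap_core M
    ((Bl.take (l : ℕ)).flatten ++ v l.castSucc)
    (((Bl.drop ((l : ℕ)+1)).take ((m : ℕ) - ((l : ℕ)+1))).flatten ++ v m.castSucc)
    ((Bl.drop ((m : ℕ)+1)).flatten) (w l) (w m) M.q₀ k1 k2
  have hfsU : IA.fs M M.q₀ BlU.flatten = IA.fs M M.q₀ Bl.flatten := by
    rw [hpreU, hpreW]; exact hcore.1
  have hdlU : IA.dl M M.q₀ BlU.flatten = IA.dl M M.q₀ Bl.flatten := by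
    rw [hpreU, hpreW]; exact hcore.2
  -- ρk facts
  have hkne : Nonempty (Fin M.k) := by
    rcases hwi : w ⟨0, hr0⟩ with _ | ⟨a, t⟩
    · exact absurd (hw ⟨0, hr0⟩) (by simp [hwi])
    · exact ⟨(M.δ M.q₀ a).2.1⟩
  have hsq : ∀ i, Real.sqrt (M.p i) ≤ ρk := by
    intro i; rw [hρk]
    exact le_ciSup (f := fun i : Fin M.k => Real.sqrt (M.p i))
      (Set.Finite.bddAbove (Set.finite_range _)) i
  have hρ0 : 0 ≤ ρk := le_trans (Real.sqrt_nonneg _) (hsq (Classical.arbitrary _))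
  have hincr : ∀ mm, -ρk ≤ M.incr mm := by
    rintro ⟨i, b⟩
    cases b
    · simpa [RealCounterPBDC.incr] using neg_le_neg (hsq i)
    · simp only [RealCounterPBDC.incr, if_pos]
      have := Real.sqrt_nonneg ((M.p i : ℕ) : ℝ)
      linarith
  -- length bookkeeping
  set Sv : ℕ := ∑ i ∈ Finset.univ.filter
      (fun i : Fin (r+1) => i ≠ 0 ∧ i ≠ Fin.last r), (v i).length with hSv
  set Sw : ℕ := ∑ i : Fin r, (w i).length with hSw
  have hsum2 : ∑ i : Fin r, (v i.castSucc).length = (v 0).length + Sv := by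
    have h1 := Fin.sum_univ_castSucc (f := fun i : Fin (r+1) => (v i).length)
    have h2 : ∑ i : Fin (r+1), (v i).length
        = (v 0).length + (v (Fin.last r)).length + Sv := by
      have h0l : (0 : Fin (r+1)) ≠ Fin.last r := by
        simp only [ne_eq, Fin.ext_iff, Fin.val_zero, Fin.val_last]
        omega
      have hfilter : Finset.filter (fun i : Fin (r+1) => i = 0 ∨ i = Fin.last r)
          Finset.univ = {0, Fin.last r} := by
        ext i; simp
      rw [← Finset.sum_filter_add_sum_filter_not Finset.univ
        (fun i : Fin (r+1) => i = 0 ∨ i = Fin.last r) (fun i => (v i).length), hfilter,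
        Finset.sum_pair h0l, hSv]
      have hfe : Finset.filter (fun i : Fin (r+1) => ¬(i = 0 ∨ i = Fin.last r)) Finset.univ
          = Finset.filter (fun i : Fin (r+1) => i ≠ 0 ∧ i ≠ Fin.last r) Finset.univ := by
        ext i; simp [not_or]
      rw [hfe]
    omega
  have hlenU : BlU.flatten.length = (v 0).length + Sv + Sw := by
    rw [List.length_flatten, hBlU, List.map_ofFn, List.sum_ofFn]
    simp only [Function.comp, List.length_append]
    rw [Finset.sum_add_distrib, Equiv.sum_comp (Equiv.swap l m) (fun i => (w i).length),
      hsum2, ← hSw]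
  -- v 0 is a prefix of both strings
  have hcs0 : ((⟨0, hr0⟩ : Fin r).castSucc) = (0 : Fin (r+1)) := by
    simp [Fin.ext_iff]
  have hv0U : v 0 <+: BlU.flatten ++ v (Fin.last r) := by
    have h0 : BlU = BlU[0]'(by omega) :: BlU.drop 1 := by
      conv_lhs => rw [← List.drop_zero (l := BlU), ← List.getElem_cons_drop (as := BlU) (i := 0) (by omega)]
    have h00 : BlU[0]'(by omega)
        = v 0 ++ w (Equiv.swap l m ⟨0, hr0⟩) := by
      simp [hBlU, hcs0]
    rw [h0, List.flatten_cons, h00]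
    simp only [List.append_assoc]
    exact List.prefix_append _ _
  have hv0W : v 0 <+: Bl.flatten ++ v (Fin.last r) := by
    have h0 : Bl = Bl[0]'(by omega) :: Bl.drop 1 := by
      conv_lhs => rw [← List.drop_zero (l := Bl), ← List.getElem_cons_drop (as := Bl) (i := 0) (by omega)]
    have h00 : Bl[0]'(by omega) = v 0 ++ w ⟨0, hr0⟩ := by
      simp [hBl, hcs0]
    rw [h0, List.flatten_cons, h00]
    simp only [List.append_assoc]
    exact List.prefix_append _ _
  -- the two runs agree
  have hrun : M.run (BlU.flatten ++ v (Fin.last r)) = M.run (Bl.flatten ++ v (Fin.last r)) := by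
    rw [IA.run_eq, IA.run_eq]
    simp only [IA.fs_append, IA.dl_append, hfsU, hdlU]
  simp only [RealCounterPBDC.language, Set.mem_setOf_eq] at hx ⊢
  obtain ⟨hxpre, hxacc, hxctr⟩ := hx
  refine ⟨?_, ?_, ?_⟩
  · intro y hy
    by_cases hc1 : y.length ≤ BlU.flatten.length
    · by_cases hc2 : y.length ≤ (v 0).length
      · exact hxpre y ((List.prefix_of_prefix_length_le hy hv0U hc2).trans hv0W)
      · have hvy : v 0 <+: y := List.prefix_of_prefix_length_le hv0U hy (by omega)
        obtain ⟨t, ht⟩ := hvy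
        have hctry : M.ctr y = IA.dl M M.q₀ (v 0) + IA.dl M (IA.fs M M.q₀ (v 0)) t := by
          rw [← ht, IA.ctr_eq, IA.dl_append]
        have htlen : t.length ≤ Sv + Sw := by
          have h := congrArg List.length ht
          simp only [List.length_append] at h
          omega
        have hlb := IA.dl_lb M hincr t (IA.fs M M.q₀ (v 0))
        have hmul : (t.length : ℝ) * ρk ≤ ((Sv + Sw : ℕ) : ℝ) * ρk := by
          apply mul_le_mul_of_nonneg_right _ hρ0
          exact_mod_cast htlen
        rw [IA.ctr_eq] at hctr
        rw [hctry]
        push_cast at hmul hctr ⊢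
        linarith
    · push_neg at hc1
      have hpy : BlU.flatten <+: y :=
        List.prefix_of_prefix_length_le ⟨v (Fin.last r), rfl⟩ hy (le_of_lt hc1)
      obtain ⟨t, ht⟩ := hpy
      have htl : t <+: v (Fin.last r) := by
        rw [← ht] at hy
        exact (List.prefix_append_right_inj _).1 hy
      have h0 := hxpre (Bl.flatten ++ t) ((List.prefix_append_right_inj _).2 htl)
      have hcy : M.ctr y = M.ctr (Bl.flatten ++ t) := by
        rw [← ht, IA.ctr_eq, IA.ctr_eq, IA.dl_append, IA.dl_append, hfsU, hdlU]
      rw [hcy]; exact h0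
  · rw [hrun]; exact hxacc
  · rw [RealCounterPBDC.ctr, hrun]; exact hxctr
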